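/- Let R be a commutative domain with 2 ≠ 0 in R, let x ∈ R be nonzero, and let A be the subring of 2×2 matrices over R consisting of matrices (a b; c d) with c ∈ xR. Then A is a free R-module with basis {e_{11}, e_{12}, x·e_{21}, e_{22}}, and the determinant of the 4×4 matrix (tr(z_i z_j)), where tr is the regular (left-multiplication) trace of A over R and (z_1,z_2,z_3,z_4) = (e_{11}, e_{12}, x e_{21}, e_{22}), equals −2^4 x^2. -/

import Mathlib

set_option synthInstance.maxHeartbeats 400000
set_option maxHeartbeats 1000000

/-- Let `R` be a commutative domain with `2 ≠ 0`, `x ∈ R` nonzero, and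
`A ⊆ M₂(R)` the subalgebra of matrices `(a b; c d)` with `c ∈ xR`.  Then `A` is a free
`R`-module with basis `{e₁₁, e₁₂, x e₂₁, e₂₂}`, and the determinant of the `4 × 4` matrix
`(tr (z_i z_j))`, where `tr` is the regular (left-multiplication) trace of `A` over `R`,
equals `-(2^4) x^2`. -/
theorem discriminant_of_triangular_order
    (R : Type*) [CommRing R] [IsDomain R] (h2 : (2 : R) ≠ 0)
    (x : R) (hx : x ≠ 0)
    (A : Subalgebra R (Matrix (Fin 2) (Fin 2) R))
    (hA : ∀ M : Matrix (Fin 2) (Fin 2) R, M ∈ A ↔ ∃ r : R, M 1 0 = x * r)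
    (z : Fin 4 → A)
    (hz0 : (z 0 : Matrix (Fin 2) (Fin 2) R) = Matrix.single 0 0 1)
    (hz1 : (z 1 : Matrix (Fin 2) (Fin 2) R) = Matrix.single 0 1 1)
    (hz2 : (z 2 : Matrix (Fin 2) (Fin 2) R) = Matrix.single 1 0 x)
    (hz3 : (z 3 : Matrix (Fin 2) (Fin 2) R) = Matrix.single 1 1 1) :
    (∃ bas : Module.Basis (Fin 4) R A, ∀ i, bas i = z i) ∧
    Matrix.det (Matrix.of fun i j =>
        LinearMap.trace R A (LinearMap.mulLeft R (z i * z j))) = -(2 ^ 4 * x ^ 2) := by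
  have ne01 : (0 : Fin 2) ≠ 1 := by decide
  have ne10 : (1 : Fin 2) ≠ 0 := by decide
  -- multiplication table
  have m00 : z 0 * z 0 = z 0 := by
    apply Subtype.ext; push_cast [hz0]; simp
  have m01 : z 0 * z 1 = z 1 := by
    apply Subtype.ext; push_cast [hz0, hz1]; simp
  have m02 : z 0 * z 2 = 0 := by
    apply Subtype.ext; push_cast [hz0, hz2]; simp
  have m03 : z 0 * z 3 = 0 := by
    apply Subtype.ext; push_cast [hz0, hz3]; simp
  have m10 : z 1 * z 0 = 0 := by
    apply Subtype.ext; push_cast [hz1, hz0]; simp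
  have m11 : z 1 * z 1 = 0 := by
    apply Subtype.ext; push_cast [hz1]; simp
  have m12 : z 1 * z 2 = x • z 0 := by
    apply Subtype.ext; push_cast [hz1, hz2, hz0]
    simp
  have m13 : z 1 * z 3 = z 1 := by
    apply Subtype.ext; push_cast [hz1, hz3]; simp
  have m20 : z 2 * z 0 = z 2 := by
    apply Subtype.ext; push_cast [hz2, hz0]; simp
  have m21 : z 2 * z 1 = x • z 3 := by
    apply Subtype.ext; push_cast [hz2, hz1, hz3]
    simp
  have m22 : z 2 * z 2 = 0 := by
    apply Subtype.ext; push_cast [hz2]; simp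
  have m23 : z 2 * z 3 = 0 := by
    apply Subtype.ext; push_cast [hz2, hz3]; simp
  have m30 : z 3 * z 0 = 0 := by
    apply Subtype.ext; push_cast [hz3, hz0]; simp
  have m31 : z 3 * z 1 = 0 := by
    apply Subtype.ext; push_cast [hz3, hz1]; simp
  have m32 : z 3 * z 2 = z 2 := by
    apply Subtype.ext; push_cast [hz3, hz2]; simp
  have m33 : z 3 * z 3 = z 3 := by
    apply Subtype.ext; push_cast [hz3]; simp
  -- linear independence
  have hli : LinearIndependent R z := by
    rw [Fintype.linearIndependent_iff]
    intro c hc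
    have hc' : (c 0) • (z 0 : Matrix (Fin 2) (Fin 2) R) + (c 1) • (z 1 : Matrix (Fin 2) (Fin 2) R)
        + (c 2) • (z 2 : Matrix (Fin 2) (Fin 2) R) + (c 3) • (z 3 : Matrix (Fin 2) (Fin 2) R) = 0 := by
      have := congrArg (Subtype.val) hc
      push_cast [Fin.sum_univ_four] at this
      convert this using 2 <;> push_cast <;> ring
    rw [hz0, hz1, hz2, hz3] at hc'
    have h00 := congrFun (congrFun hc' 0) 0
    have h01 := congrFun (congrFun hc' 0) 1
    have h10 := congrFun (congrFun hc' 1) 0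
    have h11 := congrFun (congrFun hc' 1) 1
    simp [Matrix.single] at h00 h01 h10 h11
    intro i
    fin_cases i
    · simpa using h00
    · simpa using h01
    · exact h10.resolve_right hx
    · simpa using h11
  have hsp : ⊤ ≤ Submodule.span R (Set.range z) := by
    rintro ⟨M, hM⟩ -
    obtain ⟨r, hr⟩ := (hA M).mp hM
    have hMe : (⟨M, hM⟩ : A) = (M 0 0) • z 0 + (M 0 1) • z 1 + r • z 2 + (M 1 1) • z 3 := by
      apply Subtype.ext
      push_cast [hz0, hz1, hz2, hz3]
      ext i j
      fin_cases i <;> fin_cases j <;>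
        simp [Matrix.single, hr, mul_comm]
    rw [hMe]
    refine Submodule.add_mem _ (Submodule.add_mem _ (Submodule.add_mem _ ?_ ?_) ?_) ?_ <;>
      exact Submodule.smul_mem _ _ (Submodule.subset_span ⟨_, rfl⟩)
  let bas : Module.Basis (Fin 4) R A := Module.Basis.mk hli hsp
  have hbas : ∀ i, bas i = z i := fun i => Module.Basis.mk_apply hli hsp i
  have hrep : ∀ i j, bas.repr (z i) j = if i = j then 1 else 0 := by
    intro i j
    rw [← hbas, bas.repr_self, Finsupp.single_apply]
  have htr : ∀ w : A, LinearMap.trace R A (LinearMap.mulLeft R w) =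
      bas.repr (w * z 0) 0 + bas.repr (w * z 1) 1 + bas.repr (w * z 2) 2 + bas.repr (w * z 3) 3 := by
    intro w
    rw [LinearMap.trace_eq_matrix_trace R bas, Matrix.trace, Fin.sum_univ_four]
    simp [Matrix.diag, LinearMap.toMatrix_apply, LinearMap.mulLeft_apply, hbas]
  constructor
  · exact ⟨bas, hbas⟩
  · have key : (Matrix.of fun i j =>
        LinearMap.trace R A (LinearMap.mulLeft R (z i * z j))) =
        !![2, 0, 0, 0; 0, 0, 2*x, 0; 0, 2*x, 0, 0; 0, 0, 0, 2] := by
      ext i j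
      fin_cases i <;> fin_cases j <;>
        · rw [Matrix.of_apply, htr]
          simp [m00, m01, m02, m03, m10, m11, m12, m13, m20, m21, m22, m23, m30, m31, m32, m33,
            smul_mul_assoc, hrep]
          try ring
          try simp [Matrix.vecHead, Matrix.vecTail]
    rw [key]
    simp [Matrix.det_succ_row_zero, Fin.sum_univ_succ]
    ring
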